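/- Let P be a finite poset and Q a finite poset of height one. Let f : E(P) → Q be a strict surjective order-preserving map (strict: f[L(P)] = L(Q) and f[U(P)] = U(Q)). Then f extends to an order-preserving map g : P → Q if and only if the following holds: no 4-element subset F ⊆ E(P) that is an improper 4-crown of P contains points from two different fibers f⁻¹(a), f⁻¹(b) with a ≠ b in L(Q) and also points from two different fibers f⁻¹(v), f⁻¹(w) with v ≠ w in U(Q). -/

import Mathlib

open Set

/-- Minimal points of a poset. -/
def LSet (α : Type*) [PartialOrder α] : Set α := {x | ∀ y, y ≤ x → y = x}

/-- Maximal points of a poset. -/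
def USet (α : Type*) [PartialOrder α] : Set α := {x | ∀ y, x ≤ y → y = x}

/-- Extremal points. -/
def ESet (α : Type*) [PartialOrder α] : Set α := LSet α ∪ USet α

/-- Non-extremal (interior) points. -/
def MSet (α : Type*) [PartialOrder α] : Set α := (ESet α)ᶜ

/-- No isolated points: every point is comparable to some other point. -/
def NoIsolated (α : Type*) [PartialOrder α] : Prop := ∀ x : α, ∃ y : α, x < y ∨ y < x

/-- Height one: every point is extremal and some strict comparability exists. -/
def HeightOne (α : Type*) [PartialOrder α] : Prop :=
  (∀ x : α, x ∈ ESet α) ∧ ∃ x y : α, x < y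

/-- A 4-crown with minimal points a, b and maximal points v, w:
the comparabilities are exactly a<v, a<w, b<v, b<w. -/
def IsCrown {α : Type*} [PartialOrder α] (a b v w : α) : Prop :=
  a < v ∧ a < w ∧ b < v ∧ b < w ∧ ¬ a ≤ b ∧ ¬ b ≤ a ∧ ¬ v ≤ w ∧ ¬ w ≤ v

/-- The inner of a 4-crown: [a,v] ∩ [b,w]. -/
def crownInner {α : Type*} [PartialOrder α] (a b v w : α) : Set α :=
  {m | a ≤ m ∧ m ≤ v} ∩ {m | b ≤ m ∧ m ≤ w}

/-- An improper 4-crown contained in the extremal points E(P). -/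
def IsImproperCrownE {α : Type*} [PartialOrder α] (a b v w : α) : Prop :=
  IsCrown a b v w ∧ a ∈ ESet α ∧ b ∈ ESet α ∧ v ∈ ESet α ∧ w ∈ ESet α ∧
    (crownInner a b v w).Nonempty

/-- Inner points of improper 4-crowns contained in E(P). -/
def innerPts (α : Type*) [PartialOrder α] : Set α :=
  {m | ∃ a b v w : α, IsImproperCrownE a b v w ∧ m ∈ crownInner a b v w}

/-- Ξ(m): union of all improper 4-crowns with inner point m. -/
def Xi {α : Type*} [PartialOrder α] (m : α) : Set α :=
  (LSet α ∩ {x | x ≤ m}) ∪ (USet α ∩ {x | m ≤ x})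

/-- 4-crown bundles: maximal sets Ξ(m) with respect to inclusion. -/
def bundles (α : Type*) [PartialOrder α] : Set (Set α) :=
  {F | ∃ m ∈ innerPts α, F = Xi m ∧
    ∀ m' ∈ innerPts α, Xi m ⊆ Xi m' → Xi m' = Xi m}

/-- R is a retract of the poset on α. -/
def IsRetract (α : Type*) [PartialOrder α] (R : Set α) : Prop :=
  ∃ r : α → α, Monotone r ∧ (∀ x, r (r x) = r x) ∧ Set.range r = R

/-- C is a retract of the induced subposet on Y. -/
def IsRetractIn {α : Type*} [PartialOrder α] (Y C : Set α) : Prop :=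
  ∃ r : Y → Y, Monotone r ∧ (∀ x, r (r x) = r x) ∧
    Set.range r = {y : Y | (y : α) ∈ C}

/-- The comparability graph of the poset is connected. -/
def PosetConnected (α : Type*) [PartialOrder α] : Prop :=
  ∀ x y : α, Relation.ReflTransGen (fun u v => u ≤ v ∨ v ≤ u) x y

/-- Minimal points of an induced subposet. -/
def minIn {α : Type*} [PartialOrder α] (S : Set α) : Set α :=
  {x ∈ S | ∀ y ∈ S, y ≤ x → y = x}

/-- Maximal points of an induced subposet. -/
def maxIn {α : Type*} [PartialOrder α] (S : Set α) : Set α :=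
  {x ∈ S | ∀ y ∈ S, x ≤ y → y = x}

theorem stmt3 {α β : Type*} [Fintype α] [PartialOrder α] [Fintype β] [PartialOrder β]
    (hPiso : NoIsolated α) (hQ : HeightOne β)
    (f : α → β) (hf : ∀ x ∈ ESet α, ∀ y ∈ ESet α, x ≤ y → f x ≤ f y)
    (hL : f '' LSet α = LSet β) (hU : f '' USet α = USet β) :
    (∃ g : α → β, Monotone g ∧ ∀ x ∈ ESet α, g x = f x) ↔
    (∀ a b v w : α, IsImproperCrownE a b v w → ¬ (f a ≠ f b ∧ f v ≠ f w)) := by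
  classical
  have hdisj : ∀ x : α, x ∈ LSet α → x ∉ USet α := by
    intro x hxL hxU
    obtain ⟨y, hy | hy⟩ := hPiso x
    · exact hy.ne' (hxU y hy.le)
    · exact hy.ne (hxL y hy.le)
  constructor
  · rintro ⟨g, hg, hge⟩ a b v w hC hcon
    obtain ⟨hfab, hfvw⟩ := hcon
    obtain ⟨hcr, haE, hbE, hvE, hwE, m, hm⟩ := hC
    obtain ⟨hav, haw, hbv, hbw, -, -, -, -⟩ := hcr
    obtain ⟨⟨ham, hmv⟩, hbm, hmw⟩ := hm
    have hga : f a ≤ g m := by rw [← hge a haE]; exact hg ham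
    have hgb : f b ≤ g m := by rw [← hge b hbE]; exact hg hbm
    have hgv : g m ≤ f v := by rw [← hge v hvE]; exact hg hmv
    have hgw : g m ≤ f w := by rw [← hge w hwE]; exact hg hmw
    rcases hQ.1 (g m) with h | h
    · exact hfab ((h _ hga).trans (h _ hgb).symm)
    · exact hfvw ((h _ hgv).trans (h _ hgw).symm)
  · intro H
    set A : α → Set β := fun x => f '' (LSet α ∩ {l | l ≤ x}) with hAdef
    set B : α → Set β := fun x => f '' (USet α ∩ {u | x ≤ u}) with hBdef
    have hAne : ∀ x, (A x).Nonempty := by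
      intro x
      obtain ⟨l, hl, hmin⟩ := Set.Finite.exists_minimalFor id {y | y ≤ x}
        (Set.toFinite _) ⟨x, le_refl x⟩
      refine ⟨f l, l, ⟨?_, hl⟩, rfl⟩
      intro y hy
      exact le_antisymm hy (hmin (le_trans hy hl) hy)
    have hBne : ∀ x, (B x).Nonempty := by
      intro x
      obtain ⟨u, hu, hmax⟩ := Set.Finite.exists_maximalFor id {y | x ≤ y}
        (Set.toFinite _) ⟨x, le_refl x⟩
      refine ⟨f u, u, ⟨?_, hu⟩, rfl⟩
      intro y hy
      exact le_antisymm (hmax (le_trans hu hy) hy) hy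
    have hAmono : ∀ {x y : α}, x ≤ y → A x ⊆ A y := by
      rintro x y hxy p ⟨l, ⟨h1, h2⟩, e⟩
      exact ⟨l, ⟨h1, le_trans h2 hxy⟩, e⟩
    have hBanti : ∀ {x y : α}, x ≤ y → B y ⊆ B x := by
      rintro x y hxy p ⟨u, ⟨h1, h2⟩, e⟩
      exact ⟨u, ⟨h1, le_trans hxy h2⟩, e⟩
    have hAB : ∀ x, ∀ p ∈ A x, ∀ q ∈ B x, p ≤ q := by
      rintro x p ⟨l, ⟨hlL, hlx⟩, rfl⟩ q ⟨u, ⟨huU, hux⟩, rfl⟩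
      exact hf l (Or.inl hlL) u (Or.inr huU) (le_trans hlx hux)
    have hkey : ∀ x, (A x).Subsingleton ∨ (B x).Subsingleton := by
      intro x
      by_contra hc
      push_neg at hc
      obtain ⟨h1, h2⟩ := hc
      unfold Set.Nontrivial at h1 h2
      obtain ⟨p, ⟨l1, ⟨hl1L, hl1x⟩, rfl⟩, q, ⟨l2, ⟨hl2L, hl2x⟩, rfl⟩, hpq⟩ := h1
      obtain ⟨r, ⟨u1, ⟨hu1U, hu1x⟩, rfl⟩, s, ⟨u2, ⟨hu2U, hu2x⟩, rfl⟩, hrs⟩ := h2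
      have hlt : ∀ l u : α, l ∈ LSet α → u ∈ USet α → l ≤ u → l < u := by
        intro l u hlL huU h
        exact lt_of_le_of_ne h (fun e => hdisj l hlL (e ▸ huU))
      refine H l1 l2 u1 u2 ⟨⟨hlt _ _ hl1L hu1U (le_trans hl1x hu1x),
        hlt _ _ hl1L hu2U (le_trans hl1x hu2x),
        hlt _ _ hl2L hu1U (le_trans hl2x hu1x),
        hlt _ _ hl2L hu2U (le_trans hl2x hu2x),
        fun h => hpq (congrArg f (hl2L l1 h)),
        fun h => hpq (congrArg f (hl1L l2 h)).symm,
        fun h => hrs (congrArg f (hu1U u2 h)).symm,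
        fun h => hrs (congrArg f (hu2U u1 h))⟩,
        Or.inl hl1L, Or.inl hl2L, Or.inr hu1U, Or.inr hu2U,
        x, ⟨hl1x, hu1x⟩, hl2x, hu2x⟩ ⟨hpq, hrs⟩
    have hAL : ∀ x ∈ LSet α, ∀ p ∈ A x, p = f x := by
      rintro x hxL p ⟨l, ⟨hlL, hlx⟩, rfl⟩
      exact congrArg f (hxL l hlx)
    have hBU : ∀ x ∈ USet α, ∀ p ∈ B x, p = f x := by
      rintro x hxU p ⟨u, ⟨huU, hux⟩, rfl⟩
      exact congrArg f (hxU u hux)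
    refine ⟨fun x => if h : (A x).Subsingleton ∧ x ∉ USet α then (hAne x).some
      else (hBne x).some, ?_, ?_⟩
    · intro x y hxy
      dsimp only
      by_cases hx : (A x).Subsingleton ∧ x ∉ USet α
      · rw [dif_pos hx]
        by_cases hy : (A y).Subsingleton ∧ y ∉ USet α
        · rw [dif_pos hy]
          exact le_of_eq (hy.1 (hAmono hxy (hAne x).some_mem) (hAne y).some_mem)
        · rw [dif_neg hy]
          exact hAB y _ (hAmono hxy (hAne x).some_mem) _ (hBne y).some_mem
      · rw [dif_neg hx]
        by_cases hy : (A y).Subsingleton ∧ y ∉ USet α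
        · exfalso
          refine hx ⟨hy.1.anti (hAmono hxy), fun hxU => hy.2 ?_⟩
          rw [hxU y hxy]
          exact hxU
        · rw [dif_neg hy]
          have hBsub : (B x).Subsingleton := by
            rcases not_and_or.mp hx with h | h
            · exact (hkey x).resolve_left h
            · rw [not_not] at h
              intro p hp q hq
              rw [hBU x h p hp, hBU x h q hq]
          exact le_of_eq (hBsub (hBne x).some_mem (hBanti hxy (hBne y).some_mem))
    · intro x hxE
      dsimp only
      rcases hxE with hxL | hxU
      · have hc : (A x).Subsingleton ∧ x ∉ USet α := by
          refine ⟨?_, hdisj x hxL⟩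
          intro p hp q hq
          rw [hAL x hxL p hp, hAL x hxL q hq]
        rw [dif_pos hc]
        exact hAL x hxL _ (hAne x).some_mem
      · rw [dif_neg (fun h => h.2 hxU)]
        exact hBU x hxU _ (hBne x).some_mem
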